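/- Let U ⊂ ℝ² be open bounded with Lipschitz boundary, g ∈ W^{1,∞}(U), ξ ∈ U, and for ρ ≥ 0 set U_ρ = U \ B_ρ(ξ). Let R_ρ be the harmonic function on U_ρ with R_ρ − g ∈ H¹₀(U_ρ). Then R_ρ converges to R₀ locally uniformly on U \ {ξ} as ρ → 0. -/

import Mathlib

noncomputable section

abbrev Pt := EuclideanSpace ℝ (Fin 2)

/-- `f` is harmonic on `s`: it is `C²` on `s` and its Laplacian vanishes on `s`. -/
def HarmOn (f : Pt → ℝ) (s : Set Pt) : Prop :=
  ContDiffOn ℝ 2 f s ∧ ∀ x ∈ s,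
    (∑ i : Fin 2, iteratedFDeriv ℝ 2 f x
      ![EuclideanSpace.single i (1 : ℝ), EuclideanSpace.single i (1 : ℝ)]) = 0

open Filter Set

lemma lemA {φ ψ : ℝ → ℝ} {L : ℝ} (hmax : IsLocalMax φ 0)
    (hd : ∀ᶠ t in nhds (0:ℝ), HasDerivAt φ (ψ t) t)
    (hd2 : HasDerivAt ψ L 0) : L ≤ 0 := by
  by_contra hL
  push_neg at hL
  have hψ0 : ψ 0 = 0 := hmax.hasDerivAt_eq_zero hd.self_of_nhds
  have hslope : Tendsto (fun t => ψ t / t) (nhdsWithin 0 {(0:ℝ)}ᶜ) (nhds L) := by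
    have h := hasDerivAt_iff_tendsto_slope.1 hd2
    have heq : (fun t => ψ t / t) =ᶠ[nhdsWithin 0 {(0:ℝ)}ᶜ] slope ψ 0 := by
      filter_upwards [] with t
      simp [slope_def_field, hψ0]
    exact Tendsto.congr' heq.symm h
  have hev : ∀ᶠ t in nhdsWithin 0 {(0:ℝ)}ᶜ, 0 < ψ t / t :=
    hslope.eventually (eventually_gt_nhds hL)
  have hev' : ∀ᶠ t in nhdsWithin (0:ℝ) (Set.Ioi 0), 0 < ψ t / t :=
    nhdsWithin_mono _ (fun t (ht : t ∈ Set.Ioi 0) => ne_of_gt ht) hev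
  have hev2 : ∀ᶠ t in nhdsWithin (0:ℝ) (Set.Ioi 0), HasDerivAt φ (ψ t) t :=
    nhdsWithin_le_nhds hd
  have hev3 : ∀ᶠ t in nhdsWithin (0:ℝ) (Set.Ioi 0), φ t ≤ φ 0 :=
    nhdsWithin_le_nhds hmax
  obtain ⟨b, hb0, hb⟩ := (nhdsGT_basis (0:ℝ)).eventually_iff.1 (hev'.and (hev2.and hev3))
  set b' := b/2 with hb'
  have hb'0 : 0 < b' := by positivity
  have hb'mem : ∀ t ∈ Set.Ioc 0 b', 0 < ψ t / t ∧ HasDerivAt φ (ψ t) t ∧ φ t ≤ φ 0 := by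
    intro t ht
    exact hb ⟨ht.1, lt_of_le_of_lt ht.2 (by simpa [hb'] using half_lt_self hb0)⟩
  have hcont : ContinuousOn φ (Set.Icc 0 b') := by
    intro t ht
    rcases eq_or_lt_of_le ht.1 with h0 | h0
    · rw [← h0]; exact hd.self_of_nhds.continuousAt.continuousWithinAt
    · exact ((hb'mem t ⟨h0, ht.2⟩).2.1.continuousAt).continuousWithinAt
  obtain ⟨c, hc, hceq⟩ := exists_hasDerivAt_eq_slope φ ψ hb'0 hcont
    (fun t ht => (hb'mem t ⟨ht.1, le_of_lt ht.2⟩).2.1)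
  have hψc : 0 < ψ c := by
    have h := (hb'mem c ⟨hc.1, le_of_lt hc.2⟩).1
    rcases div_pos_iff.1 h with ⟨h1, _⟩ | ⟨_, h2⟩
    · exact h1
    · exact absurd hc.1 (not_lt.2 h2.le)
  rw [hceq] at hψc
  have hnum : 0 < φ b' - φ 0 := by
    rcases div_pos_iff.1 hψc with ⟨h1, _⟩ | ⟨_, h2⟩
    · exact h1
    · linarith
  exact absurd (hb'mem b' ⟨hb'0, le_refl _⟩).2.2 (not_le.2 (by linarith))

lemma lemB {f : Pt → ℝ} {f' : Pt → (Pt →L[ℝ] ℝ)} {f'' : Pt →L[ℝ] Pt →L[ℝ] ℝ} {x : Pt}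
    (hmax : IsLocalMax f x) (h1 : ∀ᶠ y in nhds x, HasFDerivAt f (f' y) y)
    (h2 : HasFDerivAt f' f'' x) (e : Pt) : f'' e e ≤ 0 := by
  set l : ℝ → Pt := fun t => x + t • e with hl
  have hlt : ∀ t : ℝ, HasDerivAt l e t := by
    intro t
    simpa [hl] using ((hasDerivAt_id t).smul_const e).const_add x
  have hl0 : l 0 = x := by simp [hl]
  have hlc : Tendsto l (nhds 0) (nhds x) := by
    rw [← hl0]; exact (hlt 0).continuousAt
  apply lemA (φ := f ∘ l) (ψ := fun t => f' (l t) e)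
  · have h := hlc.eventually hmax
    exact h.mono (fun t ht => by simpa [hl0] using ht)
  · filter_upwards [hlc.eventually h1] with t ht
    exact ht.comp_hasDerivAt t (hlt t)
  · have hl0' : HasDerivAt l e 0 := hlt 0
    rw [← hl0] at h2
    have hψ : HasDerivAt (fun t => f' (l t)) (f'' e) 0 := h2.comp_hasDerivAt 0 hl0'
    exact (ContinuousLinearMap.apply ℝ ℝ e).hasFDerivAt.comp_hasDerivAt 0 hψ

noncomputable def B2 : Pt →L[ℝ] Pt →L[ℝ] ℝ := innerSL ℝ

lemma normsq_deriv (y : Pt) : HasFDerivAt (fun y : Pt => ‖y‖^2) (((2:ℝ) • B2) y) y := by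
  have h := (hasFDerivAt_id (𝕜 := ℝ) y).norm_sq
  refine HasFDerivAt.congr_fderiv h ?_
  ext v
  simp [B2, real_inner_comm]
  rfl

lemma maxprin {V : Set Pt} (hVo : IsOpen V) (hVb : Bornology.IsBounded V) {f : Pt → ℝ}
    {f' : Pt → Pt →L[ℝ] ℝ} {f'' : Pt → Pt →L[ℝ] Pt →L[ℝ] ℝ}
    (hc : ContinuousOn f (closure V))
    (hd1 : ∀ x ∈ V, HasFDerivAt f (f' x) x)
    (hd2 : ∀ x ∈ V, HasFDerivAt f' (f'' x) x)
    (hlap : ∀ x ∈ V, ∑ i : Fin 2, f'' x (EuclideanSpace.single i 1) (EuclideanSpace.single i 1) = 0)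
    (hbd : ∀ x ∈ frontier V, f x ≤ 0) : ∀ x ∈ closure V, f x ≤ 0 := by
  obtain ⟨Bnd, hBnd⟩ : ∃ B : ℝ, ∀ x ∈ closure V, ‖x‖ ≤ B := by
    obtain ⟨B, hB⟩ := hVb.closure.subset_closedBall 0
    exact ⟨B, fun x hx => by simpa [dist_eq_norm] using hB hx⟩
  intro x hx
  have key : ∀ ε : ℝ, 0 < ε → f x ≤ ε * Bnd^2 := by
    intro ε hε
    set v : Pt → ℝ := fun y => f y + ε * ‖y‖^2 with hv
    have hvc : ContinuousOn v (closure V) :=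
      hc.add (continuousOn_const.mul (continuous_norm.pow 2).continuousOn)
    have hcpt : IsCompact (closure V) :=
      Metric.isCompact_of_isClosed_isBounded isClosed_closure hVb.closure
    obtain ⟨z, hzmem, hzmax⟩ := hcpt.exists_isMaxOn ⟨x, hx⟩ hvc
    have hzfr : z ∈ frontier V := by
      by_contra hzfr
      have hzV : z ∈ V := by
        have h' : z ∈ V ∪ frontier V := closure_eq_self_union_frontier V ▸ hzmem
        exact h'.resolve_right hzfr
      have hlocal : IsLocalMax v z :=
        hzmax.isLocalMax (mem_of_superset (hVo.mem_nhds hzV) subset_closure)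
      have h1 : ∀ᶠ y in nhds z, HasFDerivAt v (f' y + (ε • ((2:ℝ) • B2)) y) y := by
        filter_upwards [hVo.mem_nhds hzV] with y hy
        have h := (hd1 y hy).add ((normsq_deriv y).const_mul ε)
        first
          | exact h
          | (convert h using 1; ext w; simp [mul_comm])
      have h2 : HasFDerivAt (fun y => f' y + (ε • ((2:ℝ) • B2)) y)
          (f'' z + (ε • ((2:ℝ) • B2))) z :=
        (hd2 z hzV).add ((ε • ((2:ℝ) • B2)).hasFDerivAt)
      have hnonpos : ∀ i : Fin 2,
          (f'' z + (ε • ((2:ℝ) • B2))) (EuclideanSpace.single i 1) (EuclideanSpace.single i 1) ≤ 0 :=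
        fun i => lemB hlocal h1 h2 _
      have hsum : ∑ i : Fin 2, (f'' z + (ε • ((2:ℝ) • B2))) (EuclideanSpace.single i 1) (EuclideanSpace.single i 1) ≤ 0 :=
        Finset.sum_nonpos (fun i _ => hnonpos i)
      have hval : ∀ i : Fin 2, (ε • ((2:ℝ) • B2)) ((EuclideanSpace.single i (1:ℝ))) (EuclideanSpace.single i (1:ℝ)) = 2 * ε := by
        intro i
        simp [B2, EuclideanSpace.inner_single_right, EuclideanSpace.single_apply]
        rw [innerSL_apply_apply]; simp
        ring
      have hsplit : ∀ i : Fin 2, (f'' z + (ε • ((2:ℝ) • B2))) (EuclideanSpace.single i 1) (EuclideanSpace.single i 1)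
          = f'' z (EuclideanSpace.single i 1) (EuclideanSpace.single i 1) + 2 * ε := by
        intro i
        rw [← hval i]
        simp
      rw [Finset.sum_congr rfl (fun i _ => hsplit i), Finset.sum_add_distrib, hlap z hzV] at hsum
      simp at hsum
      linarith
    have hzb := hbd z hzfr
    have hineq : f x + ε * ‖x‖^2 ≤ f z + ε * ‖z‖^2 := hzmax hx
    have hz2 : ε * ‖z‖^2 ≤ ε * Bnd^2 := by
      have h1 : ‖z‖ ≤ Bnd := hBnd z hzmem
      have h2 : (0:ℝ) ≤ ‖z‖ := norm_nonneg _
      exact mul_le_mul_of_nonneg_left (pow_le_pow_left₀ h2 h1 2) hε.le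
    nlinarith [mul_nonneg hε.le (sq_nonneg ‖x‖)]
  by_contra hpos
  push_neg at hpos
  have hB0 : 0 ≤ Bnd := le_trans (norm_nonneg x) (hBnd x hx)
  rcases lt_or_eq_of_le hB0 with h | h
  · have hk := key (f x / (2 * Bnd^2)) (by positivity)
    have h2 : (f x / (2*Bnd^2)) * Bnd^2 = f x / 2 := by field_simp
    rw [h2] at hk
    linarith
  · have hk := key 1 one_pos
    rw [← h] at hk
    simp at hk
    linarith

lemma B2_apply (u v : Pt) : B2 u v = @inner ℝ _ _ u v := rfl

noncomputable def Fd (ξ x : Pt) : Pt →L[ℝ] ℝ := (‖x-ξ‖^2)⁻¹ • (((2:ℝ) • B2) (x-ξ))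
noncomputable def Fdd (ξ x : Pt) : Pt →L[ℝ] Pt →L[ℝ] ℝ :=
  (‖x-ξ‖^2)⁻¹ • ((2:ℝ) • B2) +
  (((-((‖x-ξ‖^2)^2)⁻¹) • (((2:ℝ) • B2) (x-ξ))).smulRight (((2:ℝ) • B2) (x-ξ)))

lemma Q_deriv (ξ x : Pt) : HasFDerivAt (fun y : Pt => ‖y-ξ‖^2) (((2:ℝ) • B2) (x-ξ)) x := by
  have h := ((hasFDerivAt_id (𝕜 := ℝ) x).sub_const ξ).norm_sq
  first
    | exact h
    | (refine HasFDerivAt.congr_fderiv h ?_; ext v; simp [B2, real_inner_comm]; try rfl)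

lemma Qne {ξ x : Pt} (hx : x ≠ ξ) : ‖x-ξ‖^2 ≠ 0 := by
  have h : x - ξ ≠ 0 := sub_ne_zero.2 hx
  exact pow_ne_zero 2 (norm_ne_zero_iff.2 h)

lemma F_deriv {ξ x : Pt} (hx : x ≠ ξ) :
    HasFDerivAt (fun y : Pt => Real.log (‖y-ξ‖^2)) (Fd ξ x) x := by
  have h := (Real.hasDerivAt_log (Qne hx)).comp_hasFDerivAt x (Q_deriv ξ x)
  exact h

lemma Fd_deriv {ξ x : Pt} (hx : x ≠ ξ) : HasFDerivAt (Fd ξ) (Fdd ξ x) x := by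
  have hc : HasFDerivAt (fun y : Pt => (‖y-ξ‖^2)⁻¹)
      ((-((‖x-ξ‖^2)^2)⁻¹) • (((2:ℝ) • B2) (x-ξ))) x := by
    have h := (hasDerivAt_inv (Qne hx)).comp_hasFDerivAt x (Q_deriv ξ x)
    exact h
  have hm : HasFDerivAt (fun y : Pt => ((2:ℝ) • B2) (y-ξ)) ((2:ℝ) • B2) x := by
    have h := ((2:ℝ) • B2).hasFDerivAt.comp x ((hasFDerivAt_id (𝕜 := ℝ) x).sub_const ξ)
    first
      | exact h
      | (convert h using 1; ext v; simp)
  have h := hc.smul hm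
  have he : Fdd ξ x = (‖x-ξ‖^2)⁻¹ • ((2:ℝ) • B2) +
      (((-((‖x-ξ‖^2)^2)⁻¹) • (((2:ℝ) • B2) (x-ξ))).smulRight (((2:ℝ) • B2) (x-ξ))) := rfl
  rw [he]
  exact h

lemma sum_sq_eq (u : Pt) : ∑ i : Fin 2, (u i)^2 = ‖u‖^2 := by
  rw [EuclideanSpace.norm_eq, Real.sq_sqrt (by positivity)]
  simp [sq_abs]

lemma Fdd_lap {ξ x : Pt} (hx : x ≠ ξ) :
    ∑ i : Fin 2, Fdd ξ x (EuclideanSpace.single i 1) (EuclideanSpace.single i 1) = 0 := by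
  have hQ : (‖x-ξ‖:ℝ)^2 ≠ 0 := Qne hx
  have hval : ∀ i : Fin 2, Fdd ξ x (EuclideanSpace.single i 1) (EuclideanSpace.single i 1)
      = (‖x-ξ‖^2)⁻¹ * 2 - ((‖x-ξ‖^2)^2)⁻¹ * (4 * (x i - ξ i)^2) := by
    intro i
    have hu : (B2 (x-ξ)) (EuclideanSpace.single i (1:ℝ)) = x i - ξ i := by
      rw [B2_apply]
      simp [EuclideanSpace.inner_single_right]
    have hee : (B2 (EuclideanSpace.single i (1:ℝ))) (EuclideanSpace.single i (1:ℝ)) = 1 := by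
      rw [B2_apply, real_inner_self_eq_norm_sq]
      simp [EuclideanSpace.norm_single]
    have he : Fdd ξ x (EuclideanSpace.single i 1) (EuclideanSpace.single i 1)
        = (‖x-ξ‖^2)⁻¹ * (2 * (B2 (EuclideanSpace.single i (1:ℝ))) (EuclideanSpace.single i (1:ℝ)))
          + (-((‖x-ξ‖^2)^2)⁻¹ * (2 * (B2 (x-ξ)) (EuclideanSpace.single i (1:ℝ))))
            * (2 * (B2 (x-ξ)) (EuclideanSpace.single i (1:ℝ))) := by
      unfold Fdd
      simp only [ContinuousLinearMap.add_apply, ContinuousLinearMap.smul_apply,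
        ContinuousLinearMap.smulRight_apply, ContinuousLinearMap.coe_smul', Pi.smul_apply,
        smul_eq_mul]
      try ring
    rw [he, hu, hee]
    ring
  rw [Fin.sum_univ_two, hval 0, hval 1]
  have h1 : (x 0 - ξ 0)^2 + (x 1 - ξ 1)^2 = ‖x-ξ‖^2 := by
    have h := sum_sq_eq (x-ξ)
    rw [Fin.sum_univ_two] at h
    simpa using h
  field_simp
  rw [div_eq_zero_iff]; left
  nlinarith [h1, hQ]

lemma harm_derivs {f : Pt → ℝ} {V : Set Pt} (hVo : IsOpen V) (hf : ContDiffOn ℝ 2 f V)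
    {x : Pt} (hx : x ∈ V) :
    HasFDerivAt f (fderiv ℝ f x) x ∧
      HasFDerivAt (fderiv ℝ f) (fderiv ℝ (fderiv ℝ f) x) x := by
  have hca : ContDiffAt ℝ 2 f x := hf.contDiffAt (hVo.mem_nhds hx)
  refine ⟨(hca.differentiableAt (by norm_num)).hasFDerivAt, ?_⟩
  exact ((hca.fderiv_right (m := 1) le_rfl).differentiableAt (by norm_num)).hasFDerivAt

lemma harm_sum {f : Pt → ℝ} {V : Set Pt}
    (hf : ∀ x ∈ V, (∑ i : Fin 2, iteratedFDeriv ℝ 2 f x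
      ![EuclideanSpace.single i (1 : ℝ), EuclideanSpace.single i (1 : ℝ)]) = 0)
    {x : Pt} (hx : x ∈ V) :
    ∑ i : Fin 2, fderiv ℝ (fderiv ℝ f) x (EuclideanSpace.single i 1) (EuclideanSpace.single i 1) = 0 := by
  have h := hf x hx
  simp only [iteratedFDeriv_two_apply, Matrix.cons_val_zero, Matrix.cons_val_one,
    Matrix.head_cons] at h
  exact h

lemma frontier_sub {ξ : Pt} {ρ : ℝ} (hρ : 0 < ρ) (U : Set Pt) :
    frontier (U \ Metric.closedBall ξ ρ) ⊆ frontier U ∪ Metric.sphere ξ ρ := by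
  rw [Set.diff_eq]
  intro x hx
  rcases frontier_inter_subset _ _ hx with h | h
  · exact Or.inl h.1
  · right
    have h2 := h.2
    rwa [frontier_compl, frontier_closedBall _ hρ.ne'] at h2

lemma closure_dist {ξ : Pt} {ρ : ℝ} {U : Set Pt} :
    closure (U \ Metric.closedBall ξ ρ) ⊆ {y | ρ ≤ dist y ξ} := by
  apply closure_minimal
  · intro y hy
    exact (lt_of_not_ge (fun h => hy.2 (Metric.mem_closedBall.2 h))).le
  · exact isClosed_le continuous_const (continuous_id.dist continuous_const)

lemma key_bound {U : Set Pt} (hUo : IsOpen U) (hUb : Bornology.IsBounded U)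
    {ξ : Pt} {ρ d M : ℝ} (hρ : 0 < ρ) (hρd : ρ < d)
    (hd : ∀ x ∈ closure U, ‖x - ξ‖ ≤ d)
    {R0 Rρ g : Pt → ℝ}
    (hball : Metric.closedBall ξ ρ ⊆ U)
    (hharm0 : HarmOn R0 U) (hcont0 : ContinuousOn R0 (closure U))
    (hbd0 : ∀ x ∈ frontier U, R0 x = g x)
    (hharm : HarmOn Rρ (U \ Metric.closedBall ξ ρ))
    (hcont : ContinuousOn Rρ (closure (U \ Metric.closedBall ξ ρ)))
    (hbd : ∀ x ∈ frontier (U \ Metric.closedBall ξ ρ), Rρ x = g x)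
    (hM : ∀ x ∈ closure U, |g x - R0 x| ≤ M) :
    ∀ x ∈ U, ρ < ‖x - ξ‖ →
      |Rρ x - R0 x| ≤ M * (Real.log (d^2) - Real.log (‖x - ξ‖^2)) /
        (Real.log (d^2) - Real.log (ρ^2)) := by
  set V : Set Pt := U \ Metric.closedBall ξ ρ with hV
  have hVo : IsOpen V := by
    rw [hV, Set.diff_eq]
    exact hUo.inter (Metric.isClosed_closedBall.isOpen_compl)
  have hVb : Bornology.IsBounded V := hUb.subset Set.diff_subset
  have hξU : ξ ∈ U := hball (Metric.mem_closedBall_self hρ.le)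
  have hM0 : 0 ≤ M := le_trans (abs_nonneg _) (hM ξ (subset_closure hξU))
  have hden : 0 < Real.log (d^2) - Real.log (ρ^2) := by
    have h1 : ρ^2 < d^2 := by nlinarith
    have := Real.log_lt_log (by positivity) h1
    linarith
  set cρ : ℝ := M / (Real.log (d^2) - Real.log (ρ^2)) with hcρ
  have hcρ0 : 0 ≤ cρ := div_nonneg hM0 hden.le
  have hsub : closure V ⊆ closure U := closure_mono Set.diff_subset
  have hVne : ∀ y ∈ closure V, y ≠ ξ := by
    intro y hy heq
    have := closure_dist hy
    simp only [Set.mem_setOf_eq, heq] at this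
    simp at this
    linarith
  -- main claim for s = ±1
  have main : ∀ s : ℝ, s = 1 ∨ s = -1 → ∀ x ∈ closure V,
      s * (Rρ x - R0 x) + cρ * Real.log (‖x - ξ‖^2) - cρ * Real.log (d^2) ≤ 0 := by
    intro s hs
    apply maxprin hVo hVb
      (f' := fun y => s • (fderiv ℝ Rρ y - fderiv ℝ R0 y) + cρ • Fd ξ y)
      (f'' := fun y => s • (fderiv ℝ (fderiv ℝ Rρ) y - fderiv ℝ (fderiv ℝ R0) y) + cρ • Fdd ξ y)
    · -- continuity
      have hlog : ContinuousOn (fun y : Pt => Real.log (‖y - ξ‖^2)) (closure V) := by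
        intro y hy
        apply ContinuousAt.continuousWithinAt
        exact ContinuousAt.log (((continuous_id.sub continuous_const).norm.pow 2).continuousAt)
          (Qne (hVne y hy))
      exact ((continuousOn_const.mul (hcont.sub (hcont0.mono hsub))).add
        (continuousOn_const.mul hlog)).sub continuousOn_const
    · -- first derivative
      intro x hx
      have hxU : x ∈ U := hx.1
      have hxne : x ≠ ξ := hVne x (subset_closure hx)
      have h1 := (harm_derivs hVo hharm.1 hx).1
      have h2 := (harm_derivs hUo hharm0.1 hxU).1
      exact (((h1.sub h2).const_mul s).add ((F_deriv hxne).const_mul cρ)).sub_const _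
    · -- second derivative
      intro x hx
      have hxU : x ∈ U := hx.1
      have hxne : x ≠ ξ := hVne x (subset_closure hx)
      have h1 := (harm_derivs hVo hharm.1 hx).2
      have h2 := (harm_derivs hUo hharm0.1 hxU).2
      exact ((h1.sub h2).const_smul s).add ((Fd_deriv hxne).const_smul cρ)
    · -- Laplacian
      intro x hx
      have hxU : x ∈ U := hx.1
      have hxne : x ≠ ξ := hVne x (subset_closure hx)
      have hA := harm_sum hharm.2 hx
      have hB := harm_sum hharm0.2 hxU
      have hF := Fdd_lap (ξ := ξ) hxne
      rw [Fin.sum_univ_two] at hA hB hF ⊢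
      simp only [ContinuousLinearMap.add_apply, ContinuousLinearMap.smul_apply,
        ContinuousLinearMap.sub_apply, smul_eq_mul]
      linear_combination s * hA - s * hB + cρ * hF
    · -- boundary
      intro x hxfr
      have hRρx : Rρ x = g x := hbd x hxfr
      have hxcl : x ∈ closure U := hsub (frontier_subset_closure hxfr)
      rcases frontier_sub hρ U hxfr with hxU | hxS
      · -- on frontier U
        have hR0x : R0 x = g x := hbd0 x hxU
        have hxnU : x ∉ U := by
          rw [hUo.frontier_eq] at hxU
          exact hxU.2
        have hxne : x ≠ ξ := fun h => hxnU (h ▸ hξU)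
        have hlog : Real.log (‖x - ξ‖^2) ≤ Real.log (d^2) := by
          have hne0 : x - ξ ≠ 0 := sub_ne_zero.2 hxne
          have h0 : (0:ℝ) < ‖x - ξ‖^2 := pow_pos (norm_pos_iff.mpr hne0) 2
          have h1 : ‖x - ξ‖ ≤ d := hd x hxcl
          have h2 : (0:ℝ) ≤ ‖x - ξ‖ := norm_nonneg _
          have h3 : ‖x - ξ‖^2 ≤ d^2 := by nlinarith
          exact (Real.log_le_log_iff h0 (by nlinarith)).2 h3
        have : cρ * Real.log (‖x - ξ‖^2) ≤ cρ * Real.log (d^2) :=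
          mul_le_mul_of_nonneg_left hlog hcρ0
        rw [hRρx, hR0x]
        simp only [sub_self, mul_zero]
        linarith
      · -- on sphere
        have hxρ : ‖x - ξ‖ = ρ := by
          have := Metric.mem_sphere.1 hxS
          rwa [dist_eq_norm] at this
        have hMx := hM x hxcl
        have hcd : cρ * (Real.log (d^2) - Real.log (ρ^2)) = M := by
          rw [hcρ]
          exact div_mul_cancel₀ M hden.ne'
        rw [hxρ]
        have hsb : s * (Rρ x - R0 x) ≤ M := by
          rw [hRρx]
          rcases hs with h | h <;> rw [h] <;>
            [skip; skip] <;> cases abs_le.1 hMx <;> linarith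
        linarith [hcd]
  intro x hxU hxρ
  have hxV : x ∈ V := by
    refine ⟨hxU, ?_⟩
    intro hmem
    rw [Metric.mem_closedBall, dist_eq_norm] at hmem
    linarith
  have h1 := main 1 (Or.inl rfl) x (subset_closure hxV)
  have h2 := main (-1) (Or.inr rfl) x (subset_closure hxV)
  have heq : M * (Real.log (d^2) - Real.log (‖x - ξ‖^2)) / (Real.log (d^2) - Real.log (ρ^2))
      = cρ * Real.log (d^2) - cρ * Real.log (‖x - ξ‖^2) := by
    rw [hcρ]
    field_simp
  rw [heq]
  apply abs_le.2
  constructor <;> linarith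

/-- the harmonic functions `R_ρ` on `U_ρ = U \ B_ρ(ξ)` with boundary datum `g`
converge locally uniformly on `U \ {ξ}` to the harmonic function `R₀` on `U`
with boundary datum `g`, as `ρ → 0`. -/
theorem stmt_8 (U : Set Pt) (hUo : IsOpen U) (hUb : Bornology.IsBounded U)
    (g : Pt → ℝ) (C : NNReal) (hg : LipschitzOnWith C g (closure U))
    (ξ : Pt) (hξ : ξ ∈ U) (ρ₀ : ℝ) (hρ₀ : 0 < ρ₀)
    (hball : Metric.closedBall ξ ρ₀ ⊆ U)
    (R : ℝ → Pt → ℝ)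
    (hR0 : HarmOn (R 0) U ∧ ContinuousOn (R 0) (closure U) ∧
      ∀ x ∈ frontier U, R 0 x = g x)
    (hR : ∀ ρ ∈ Set.Ioo 0 ρ₀,
      HarmOn (R ρ) (U \ Metric.closedBall ξ ρ) ∧
      ContinuousOn (R ρ) (closure (U \ Metric.closedBall ξ ρ)) ∧
      ∀ x ∈ frontier (U \ Metric.closedBall ξ ρ), R ρ x = g x) :
    TendstoLocallyUniformlyOn R (R 0) (nhdsWithin 0 (Set.Ioi 0)) (U \ {ξ}) := by
  obtain ⟨harm0, cont0, bd0⟩ := hR0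
  -- choose d
  obtain ⟨d, hρ₀d, hdball⟩ := hUb.closure.subset_closedBall_lt ρ₀ ξ
  have hd : ∀ x ∈ closure U, ‖x - ξ‖ ≤ d := by
    intro x hx
    have := hdball hx
    rwa [Metric.mem_closedBall, dist_eq_norm] at this
  -- choose M
  have hcpt : IsCompact (closure U) :=
    Metric.isCompact_of_isClosed_isBounded isClosed_closure hUb.closure
  obtain ⟨M₀, hM₀⟩ := hcpt.exists_bound_of_continuousOn (hg.continuousOn.sub cont0)
  set M : ℝ := max M₀ 0 with hMdef
  have hM : ∀ x ∈ closure U, |g x - R 0 x| ≤ M := by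
    intro x hx
    have := hM₀ x hx
    rw [Real.norm_eq_abs] at this
    exact le_trans this (le_max_left _ _)
  rw [tendstoLocallyUniformlyOn_iff_forall_isCompact (hUo.sdiff isClosed_singleton)]
  intro K hKsub hKcpt
  rw [Metric.tendstoUniformlyOn_iff]
  intro ε hε
  rcases K.eq_empty_or_nonempty with hKe | hKne
  · filter_upwards [] with ρ x hx
    rw [hKe] at hx
    exact absurd hx (Set.notMem_empty x)
  -- distance from K to ξ
  obtain ⟨x₀, hx₀K, hx₀min⟩ := hKcpt.exists_isMinOn hKne
    (((continuous_id.sub continuous_const).norm).continuousOn)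
  set δ : ℝ := ‖x₀ - ξ‖ with hδdef
  have hδ0 : 0 < δ := by
    have h := hKsub hx₀K
    have : x₀ ≠ ξ := fun hne => h.2 (by simp [hne])
    simpa [hδdef] using norm_pos_iff.mpr (sub_ne_zero.2 this)
  have hδd : δ ≤ d := hd x₀ (subset_closure (hKsub hx₀K).1)
  -- the constant in the numerator
  set Cnum : ℝ := M * (Real.log (d^2) - Real.log (δ^2)) with hCnum
  have hCnum0 : 0 ≤ Cnum := by
    apply mul_nonneg (le_max_right _ _)
    have h1 : Real.log (δ^2) ≤ Real.log (d^2) := by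
      apply (Real.log_le_log_iff (pow_pos hδ0 2) (by nlinarith)).2
      nlinarith
    linarith
  -- tendsto statement
  have hden : Tendsto (fun ρ : ℝ => Real.log (d^2) - Real.log (ρ^2))
      (nhdsWithin 0 (Set.Ioi 0)) atTop := by
    have h1 : Tendsto (fun ρ : ℝ => Real.log (ρ^2)) (nhdsWithin 0 (Set.Ioi 0)) atBot := by
      have h2 : Tendsto (fun ρ : ℝ => (2:ℝ) * Real.log ρ) (nhdsWithin 0 (Set.Ioi 0)) atBot :=
        Real.tendsto_log_nhdsGT_zero.const_mul_atBot two_pos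
      refine h2.congr (fun ρ => ?_)
      rw [Real.log_pow]
      norm_num
    have h3 : Tendsto (fun ρ : ℝ => -Real.log (ρ^2)) (nhdsWithin 0 (Set.Ioi 0)) atTop :=
      tendsto_neg_atTop_iff.mpr h1
    have h4 := tendsto_atTop_add_const_left _ (Real.log (d^2)) h3
    exact h4.congr (fun ρ => by ring)
  have htend : Tendsto (fun ρ : ℝ => Cnum / (Real.log (d^2) - Real.log (ρ^2)))
      (nhdsWithin 0 (Set.Ioi 0)) (nhds 0) := by
    simpa [div_eq_mul_inv] using (hden.inv_tendsto_atTop).const_mul Cnum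
  have hev1 : ∀ᶠ ρ in nhdsWithin (0:ℝ) (Set.Ioi 0),
      Cnum / (Real.log (d^2) - Real.log (ρ^2)) < ε :=
    htend.eventually_lt_const hε
  have hev2 : Set.Ioo (0:ℝ) (min δ ρ₀) ∈ nhdsWithin (0:ℝ) (Set.Ioi 0) :=
    Ioo_mem_nhdsGT_of_mem ⟨le_refl 0, lt_min hδ0 hρ₀⟩
  filter_upwards [hev1, hev2] with ρ hρlt hρmem
  intro x hxK
  obtain ⟨hxU, hxξ⟩ := hKsub hxK
  have hρpos : 0 < ρ := hρmem.1
  have hρρ₀ : ρ < ρ₀ := lt_of_lt_of_le hρmem.2 (min_le_right _ _)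
  have hρδ : ρ < δ := lt_of_lt_of_le hρmem.2 (min_le_left _ _)
  have hδx : δ ≤ ‖x - ξ‖ := hx₀min hxK
  obtain ⟨harmρ, contρ, bdρ⟩ := hR ρ ⟨hρpos, hρρ₀⟩
  have hb : Metric.closedBall ξ ρ ⊆ U :=
    le_trans (Metric.closedBall_subset_closedBall hρρ₀.le) hball
  have hkey := key_bound hUo hUb hρpos (lt_of_lt_of_le (lt_of_lt_of_le hρδ hδd) le_rfl)
    hd hb harm0 cont0 bd0 harmρ contρ bdρ hM x hxU (lt_of_lt_of_le hρδ hδx)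
  -- compare with δ
  have hdenρ : 0 < Real.log (d^2) - Real.log (ρ^2) := by
    have : Real.log (ρ^2) < Real.log (d^2) := by
      apply Real.log_lt_log (pow_pos hρpos 2)
      nlinarith [hρδ, hδd, hρpos, hδ0]
    linarith
  have hmono : M * (Real.log (d^2) - Real.log (‖x - ξ‖^2)) ≤ Cnum := by
    rw [hCnum]
    apply mul_le_mul_of_nonneg_left _ (le_max_right _ _)
    have h1 : Real.log (δ^2) ≤ Real.log (‖x - ξ‖^2) := by
      apply (Real.log_le_log_iff (pow_pos hδ0 2) (by nlinarith [norm_nonneg (x - ξ)])).2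
      nlinarith [norm_nonneg (x - ξ)]
    linarith
  rw [Real.dist_eq, abs_sub_comm]
  calc |R ρ x - R 0 x| ≤ M * (Real.log (d^2) - Real.log (‖x - ξ‖^2)) /
        (Real.log (d^2) - Real.log (ρ^2)) := hkey
    _ ≤ Cnum / (Real.log (d^2) - Real.log (ρ^2)) :=
        (div_le_div_iff_of_pos_right hdenρ).mpr hmono
    _ < ε := hρlt

end
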